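/- For l ∈ ℕ let Q^n_l = conv( (l·[−1,1]^{n−1} × {0}) ∪ {e_n, −e_n} ) ⊂ ℝ^n. Then for n ≥ 3: g_{n−2}(Q^n_l) = (n−1)·(2l)^{n−3}·((2/3)l² + 1), and for n ≥ 4: g_{n−3}(Q^n_l) = (2/3)·C(n−1,2)·(2l)^{n−4}·(2l² + 1), where C(a,b) is the binomial coefficient. -/

import Mathlib

open Finset Pointwise MeasureTheory

/-- The integer lattice `ℤⁿ` viewed as a subset of `ℝⁿ`. -/
def intLattice (n : ℕ) : Set (Fin n → ℝ) := {x | ∀ j, ∃ m : ℤ, x j = (m : ℝ)}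

/-- The `i`-th successive minimum (for `1 ≤ i ≤ n`) of a set `K ⊆ ℝⁿ` with respect to `ℤⁿ`:
the infimum of all `l > 0` such that `l • K` contains at least `i` linearly independent
lattice points. -/
noncomputable def succMinima {n : ℕ} (K : Set (Fin n → ℝ)) (i : ℕ) : ℝ :=
  sInf {l : ℝ | 0 < l ∧
    i ≤ Module.finrank ℝ (Submodule.span ℝ ((l • K) ∩ intLattice n))}

/-- The slab `l·[−1,1]^{n−1} × {0} ⊆ ℝⁿ`: the cube of side `2l` in the first `n−1`
coordinates, with last coordinate `0`. -/
def cubeSlice (n l : ℕ) : Set (Fin n → ℝ) :=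
  {x | ∀ j : Fin n, ((j : ℕ) < n - 1 → |x j| ≤ (l : ℝ)) ∧ ((j : ℕ) = n - 1 → x j = 0)}

/-- The `n`-th standard unit vector of `ℝⁿ` (i.e. the last coordinate vector). -/
def lastUnitVec (n : ℕ) : Fin n → ℝ := fun j => if (j : ℕ) = n - 1 then 1 else 0

/-- The bipyramid `Q^n_l = conv( (l·[−1,1]^{n−1} × {0}) ∪ {e_n, −e_n} )`. -/
def Qnl (n l : ℕ) : Set (Fin n → ℝ) :=
  convexHull ℝ (cubeSlice n l ∪ {lastUnitVec n, -lastUnitVec n})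

/-- slab description at scale `c` -/
def Tset (m l : ℕ) (c : ℝ) : Set (Fin (m+1) → ℝ) :=
  {x | |x (Fin.last m)| ≤ c ∧ ∀ j : Fin (m+1), (j : ℕ) < m → |x j| ≤ (l:ℝ) * (c - |x (Fin.last m)|)}

lemma convex_Tset (m l : ℕ) (c : ℝ) : Convex ℝ (Tset m l c) := by
  intro x hx y hy a b ha hb hab
  obtain ⟨hx1, hx2⟩ := hx
  obtain ⟨hy1, hy2⟩ := hy
  constructor
  · simp only [Pi.add_apply, Pi.smul_apply, smul_eq_mul]
    calc |a * x (Fin.last m) + b * y (Fin.last m)| ≤ a * |x (Fin.last m)| + b * |y (Fin.last m)| := by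
          refine (abs_add_le _ _).trans ?_
          rw [abs_mul, abs_mul, abs_of_nonneg ha, abs_of_nonneg hb]
      _ ≤ a * c + b * c := by gcongr
      _ = c := by rw [← add_mul, hab, one_mul]
  · intro j hj
    have h1 := hx2 j hj
    have h2 := hy2 j hj
    have key : |a * x (Fin.last m) + b * y (Fin.last m)| ≤ a * |x (Fin.last m)| + b * |y (Fin.last m)| := by
      refine (abs_add_le _ _).trans ?_
      rw [abs_mul, abs_mul, abs_of_nonneg ha, abs_of_nonneg hb]
    simp only [Pi.add_apply, Pi.smul_apply, smul_eq_mul]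
    have habs : |a * x j + b * y j| ≤ a * |x j| + b * |y j| := by
      refine (abs_add_le _ _).trans ?_
      rw [abs_mul, abs_mul, abs_of_nonneg ha, abs_of_nonneg hb]
    have hl0 : (0:ℝ) ≤ l := by positivity
    have f1 := mul_le_mul_of_nonneg_left h1 ha
    have f2 := mul_le_mul_of_nonneg_left h2 hb
    have f3 := mul_le_mul_of_nonneg_left key hl0
    have hlc : a * ((l:ℝ) * c) + b * ((l:ℝ) * c) = (l:ℝ) * c := by
      rw [← add_mul, hab, one_mul]
    nlinarith [f1, f2, f3, habs, hlc]

lemma Qnl_eq_Tset (m l : ℕ) (hm : 1 ≤ m) : Qnl (m+1) l = Tset m l 1 := by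
  apply subset_antisymm
  · apply convexHull_min _ (convex_Tset m l 1)
    rintro x (hx | hx)
    · have hlast : x (Fin.last m) = 0 := (hx (Fin.last m)).2 (by simp)
      refine ⟨by simp [hlast], fun j hj => ?_⟩
      have := (hx j).1 (by simpa using hj)
      simpa [hlast] using this
    · rcases hx with hx | hx
      · subst hx
        refine ⟨by simp [lastUnitVec], fun j hj => ?_⟩
        have : (j:ℕ) ≠ m := by omega
        simp [lastUnitVec, this]
      · simp only [Set.mem_singleton_iff] at hx
        subst hx
        refine ⟨by simp [lastUnitVec], fun j hj => ?_⟩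
        have : (j:ℕ) ≠ m := by omega
        simp [lastUnitVec, this]
  · rintro x ⟨h1, h2⟩
    set s := x (Fin.last m) with hs
    by_cases hone : |s| = 1
    · -- x = ± lastUnitVec
      have hx0 : ∀ j : Fin (m+1), (j:ℕ) < m → x j = 0 := by
        intro j hj
        have := h2 j hj
        rw [hone] at this
        simp at this
        exact abs_eq_zero.mp (le_antisymm (by simpa using this) (abs_nonneg _))
      apply subset_convexHull
      rcases abs_eq (by norm_num : (0:ℝ) ≤ 1) |>.mp hone with h | h
      · right; left
        funext j
        by_cases hj : (j:ℕ) = m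
        · have : j = Fin.last m := Fin.ext (by simpa using hj)
          rw [this, lastUnitVec]; simp [← h]; exact hs.symm
        · have hj' : (j:ℕ) < m := by omega
          rw [hx0 j hj', lastUnitVec]; simp [hj]
      · right; right
        funext j
        by_cases hj : (j:ℕ) = m
        · have : j = Fin.last m := Fin.ext (by simpa using hj)
          rw [this]; simp [lastUnitVec, ← h]; exact hs.symm
        · have hj' : (j:ℕ) < m := by omega
          rw [hx0 j hj']; simp [lastUnitVec, hj]
    · have hlt : |s| < 1 := lt_of_le_of_ne h1 hone
      have hpos : 0 < 1 - |s| := by linarith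
      set y : Fin (m+1) → ℝ := fun j => if (j:ℕ) = m then 0 else x j / (1 - |s|) with hy
      have hycube : y ∈ cubeSlice (m+1) l := by
        intro j
        constructor
        · intro hj
          have hj' : (j:ℕ) ≠ m := by omega
          have := h2 j (by omega)
          rw [hy]; simp only [hj', if_false]
          rw [abs_div, abs_of_pos hpos, div_le_iff₀ hpos]
          linarith [this]
        · intro hj
          rw [hy]; simp only [hj]; simp
      by_cases hss : 0 ≤ s
      · have hvmem : lastUnitVec (m+1) ∈ cubeSlice (m+1) l ∪ {lastUnitVec (m+1), -lastUnitVec (m+1)} := by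
          right; left; rfl
        have hxseg : x ∈ segment ℝ y (lastUnitVec (m+1)) := by
          refine ⟨1 - |s|, |s|, le_of_lt hpos, abs_nonneg s, by ring, ?_⟩
          funext j
          simp only [Pi.add_apply, Pi.smul_apply, smul_eq_mul]
          by_cases hj : (j:ℕ) = m
          · have hjl : j = Fin.last m := Fin.ext (by simpa using hj)
            subst hjl
            have hyl : y (Fin.last m) = 0 := by simp [hy]
            have hvl : lastUnitVec (m+1) (Fin.last m) = 1 := by simp [lastUnitVec]
            rw [hyl, hvl, mul_zero, zero_add, mul_one, abs_of_nonneg hss, hs]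
          · have hyj : y j = x j / (1 - |s|) := by simp [hy, hj]
            have hvj : lastUnitVec (m+1) j = 0 := by simp [lastUnitVec, hj]
            have hne : 1 - |s| ≠ 0 := ne_of_gt hpos
            rw [hyj, hvj, mul_zero, add_zero]
            field_simp
        exact segment_subset_convexHull (Set.mem_union_left _ hycube) hvmem hxseg
      · push_neg at hss
        have hvmem : -lastUnitVec (m+1) ∈ cubeSlice (m+1) l ∪ {lastUnitVec (m+1), -lastUnitVec (m+1)} := by
          right; right; rfl
        have hxseg : x ∈ segment ℝ y (-lastUnitVec (m+1)) := by
          refine ⟨1 - |s|, |s|, le_of_lt hpos, abs_nonneg s, by ring, ?_⟩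
          funext j
          simp only [Pi.add_apply, Pi.smul_apply, smul_eq_mul, Pi.neg_apply]
          by_cases hj : (j:ℕ) = m
          · have hjl : j = Fin.last m := Fin.ext (by simpa using hj)
            subst hjl
            have hyl : y (Fin.last m) = 0 := by simp [hy]
            have hvl : lastUnitVec (m+1) (Fin.last m) = 1 := by simp [lastUnitVec]
            rw [hyl, hvl, mul_zero, zero_add, abs_of_neg hss]
            ring_nf
            exact hs
          · have hyj : y j = x j / (1 - |s|) := by simp [hy, hj]
            have hvj : lastUnitVec (m+1) j = 0 := by simp [lastUnitVec, hj]
            have hne : 1 - |s| ≠ 0 := ne_of_gt hpos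
            rw [hyj, hvj, neg_zero, mul_zero, add_zero]
            field_simp
        exact segment_subset_convexHull (Set.mem_union_left _ hycube) hvmem hxseg

lemma smul_Tset (m l : ℕ) (c : ℝ) (hc : 0 < c) : c • Tset m l 1 = Tset m l c := by
  ext x
  rw [Set.mem_smul_set_iff_inv_smul_mem₀ (ne_of_gt hc)]
  have hco : ∀ j, (c⁻¹ • x) j = x j / c := fun j => by
    simp [Pi.smul_apply, smul_eq_mul, inv_mul_eq_div]
  constructor
  · rintro ⟨h1, h2⟩
    rw [hco] at h1
    constructor
    · rw [abs_div, abs_of_pos hc, div_le_one hc] at h1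
      exact h1
    · intro j hj
      have := h2 j hj
      rw [hco, hco, abs_div, abs_div, abs_of_pos hc, div_le_iff₀ hc] at this
      calc |x j| ≤ (l:ℝ) * (1 - |x (Fin.last m)| / c) * c := this
        _ = (l:ℝ) * (c - |x (Fin.last m)|) := by field_simp
  · rintro ⟨h1, h2⟩
    constructor
    · rw [hco, abs_div, abs_of_pos hc, div_le_one hc]
      exact h1
    · intro j hj
      have := h2 j hj
      rw [hco, hco, abs_div, abs_div, abs_of_pos hc, div_le_iff₀ hc]
      calc |x j| ≤ (l:ℝ) * (c - |x (Fin.last m)|) := this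
        _ = (l:ℝ) * (1 - |x (Fin.last m)| / c) * c := by field_simp

lemma card_Tset_inter (m l k : ℕ) :
    Nat.card ↥(Tset m l (k:ℝ) ∩ intLattice (m+1)) =
      ∑ t ∈ Finset.Icc (-(k:ℤ)) (k:ℤ), (2*l*(k - t.natAbs) + 1)^m := by
  classical
  set B : ℤ → ℤ := fun t => (l:ℤ) * ((k:ℤ) - t.natAbs) with hB
  set F : Finset ((_ : ℤ) × (Fin m → ℤ)) :=
    (Finset.Icc (-(k:ℤ)) (k:ℤ)).sigma
      (fun t => Finset.Icc (fun _ => -(B t)) (fun _ => B t)) with hF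
  have hcard : F.card = ∑ t ∈ Finset.Icc (-(k:ℤ)) (k:ℤ), (2*l*(k - t.natAbs) + 1)^m := by
    rw [hF, Finset.card_sigma]
    apply Finset.sum_congr rfl
    intro t ht
    rw [Finset.mem_Icc] at ht
    have htk : t.natAbs ≤ k := by omega
    rw [Pi.card_Icc]
    have hBt : B t = ((l * (k - t.natAbs) : ℕ) : ℤ) := by
      rw [hB]; push_cast [htk]; ring
    have h1 : (Finset.Icc (-(B t)) (B t)).card = 2*l*(k - t.natAbs) + 1 := by
      rw [Int.card_Icc, hBt]
      rw [show ((l * (k - t.natAbs) : ℕ) : ℤ) + 1 - -((l * (k - t.natAbs) : ℕ) : ℤ)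
          = ((2 * l * (k - t.natAbs) + 1 : ℕ) : ℤ) by push_cast; ring]
      exact Int.toNat_natCast _
    rw [Finset.prod_congr rfl fun i _ => h1, Finset.prod_const, Finset.card_univ,
      Fintype.card_fin]
  rw [← hcard]
  -- build equiv ↥F ≃ ↥(Tset ∩ intLattice)
  set φ : ((_ : ℤ) × (Fin m → ℤ)) → (Fin (m+1) → ℝ) :=
    fun p j => if h : (j:ℕ) < m then ((p.2 ⟨(j:ℕ), h⟩ : ℤ) : ℝ) else ((p.1 : ℤ) : ℝ) with hφ
  have hmaps : ∀ p ∈ F, φ p ∈ Tset m l (k:ℝ) ∩ intLattice (m+1) := by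
    rintro ⟨t, y⟩ hp
    rw [hF, Finset.mem_sigma, Finset.mem_Icc, Finset.mem_Icc] at hp
    obtain ⟨⟨ht1, ht2⟩, hy⟩ := hp
    have ht1' : -(k:ℤ) ≤ t := ht1
    have ht2' : t ≤ (k:ℤ) := ht2
    have htk : t.natAbs ≤ k := by omega
    have hlast : φ ⟨t, y⟩ (Fin.last m) = (t : ℝ) := by
      rw [hφ]; simp
    refine ⟨⟨?_, ?_⟩, ?_⟩
    · rw [hlast, ← Int.cast_abs]
      exact_mod_cast abs_le.mpr ⟨ht1, ht2⟩
    · intro j hj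
      have hyj : φ ⟨t, y⟩ j = (y ⟨(j:ℕ), hj⟩ : ℝ) := by rw [hφ]; simp [hj]
      rw [hyj, hlast]
      have h1 : -(B t) ≤ y ⟨(j:ℕ), hj⟩ := (Pi.le_def.mp hy.1) _
      have h2 : y ⟨(j:ℕ), hj⟩ ≤ B t := (Pi.le_def.mp hy.2) _
      have habs : |y ⟨(j:ℕ), hj⟩| ≤ B t := abs_le.mpr ⟨by linarith, h2⟩
      have : ((B t : ℤ) : ℝ) = (l:ℝ) * ((k:ℝ) - |(t:ℝ)|) := by
        rw [hB]
        push_cast [Nat.cast_natAbs]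
        ring
      rw [← Int.cast_abs, ← this]
      exact_mod_cast habs
    · intro j
      rw [hφ]
      by_cases h : (j:ℕ) < m
      · exact ⟨y ⟨(j:ℕ), h⟩, by simp [h]⟩
      · exact ⟨t, by simp [h]⟩
  have hinj : Set.InjOn φ ↑F := by
    rintro ⟨t, y⟩ - ⟨t', y'⟩ - heq
    have ht : t = t' := by
      have := congrFun heq (Fin.last m)
      rw [hφ] at this
      simp at this
      exact_mod_cast this
    subst ht
    have hy : y = y' := by
      funext i
      have h := congrFun heq ⟨(i:ℕ), by omega⟩
      rw [hφ] at h
      simp [i.isLt] at h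
      exact_mod_cast h
    rw [hy]
  have hsurj : Set.SurjOn φ ↑F (Tset m l (k:ℝ) ∩ intLattice (m+1)) := by
    rintro x ⟨⟨hx1, hx2⟩, hxZ⟩
    have hch : ∀ j, x j = ((hxZ j).choose : ℝ) := fun j => (hxZ j).choose_spec
    set t : ℤ := (hxZ (Fin.last m)).choose with htdef
    set y : Fin m → ℤ := fun i => (hxZ ⟨(i:ℕ), by omega⟩).choose with hydef
    have hxt : x (Fin.last m) = (t : ℝ) := hch _
    have htabs : |t| ≤ (k:ℤ) := by
      rw [hxt, ← Int.cast_abs] at hx1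
      exact_mod_cast hx1
    have hBcast : ((B t : ℤ) : ℝ) = (l:ℝ) * ((k:ℝ) - |(t:ℝ)|) := by
      rw [hB]
      push_cast [Nat.cast_natAbs]
      ring
    refine ⟨⟨t, y⟩, ?_, ?_⟩
    · rw [hF, Finset.mem_coe, Finset.mem_sigma, Finset.mem_Icc, Finset.mem_Icc]
      constructor
      · exact abs_le.mp htabs
      · constructor <;> rw [Pi.le_def] <;> intro i
        · have hxy : x ⟨(i:ℕ), by omega⟩ = (y i : ℝ) := hch _
          have := hx2 ⟨(i:ℕ), by omega⟩ (by simpa using i.isLt)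
          rw [hxy, hxt, ← hBcast, ← Int.cast_abs] at this
          have : |y i| ≤ B t := by exact_mod_cast this
          linarith [(abs_le.mp this).1]
        · have hxy : x ⟨(i:ℕ), by omega⟩ = (y i : ℝ) := hch _
          have := hx2 ⟨(i:ℕ), by omega⟩ (by simpa using i.isLt)
          rw [hxy, hxt, ← hBcast, ← Int.cast_abs] at this
          have : |y i| ≤ B t := by exact_mod_cast this
          exact (abs_le.mp this).2
    · funext j
      rw [hφ]
      by_cases h : (j:ℕ) < m
      · simp only [dif_pos h]
        have : x ⟨(j:ℕ), by omega⟩ = (y ⟨(j:ℕ), h⟩ : ℝ) := hch _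
        rw [show (⟨(j:ℕ), by omega⟩ : Fin (m+1)) = j from Fin.ext rfl] at this
        exact this.symm
      · simp only [dif_neg h]
        have hj : j = Fin.last m := Fin.ext (by simp [Fin.val_last]; omega)
        rw [hj, hxt]
  have hFc : Nat.card ↥(↑F : Set ((_ : ℤ) × (Fin m → ℤ))) = F.card := by
    rw [Nat.card_coe_set_eq, Set.ncard_coe_finset]
  rw [← hFc]
  exact Nat.card_congr (Set.BijOn.equiv φ ⟨fun p hp => hmaps p hp, hinj, hsurj⟩).symm

lemma sum_Icc_eq (m l k : ℕ) :
    ∑ t ∈ Finset.Icc (-(k:ℤ)) (k:ℤ), (2*l*(k - t.natAbs) + 1)^m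
      = (2*l*k + 1)^m + 2 * ∑ j ∈ Finset.range k, (2*l*j + 1)^m := by
  have h1 : ∑ t ∈ Finset.Icc (-(k:ℤ)) (k:ℤ), (2*l*(k - t.natAbs) + 1)^m
      = ∑ i ∈ Finset.range (2*k+1), (2*l*(k - ((i:ℤ) - k).natAbs) + 1)^m := by
    refine Finset.sum_nbij' (fun t => (t + k).toNat) (fun i => (i:ℤ) - k) ?_ ?_ ?_ ?_ ?_
    · intro t ht; rw [Finset.mem_Icc] at ht; rw [Finset.mem_range]; omega
    · intro i hi; rw [Finset.mem_range] at hi; rw [Finset.mem_Icc]; omega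
    · intro t ht; rw [Finset.mem_Icc] at ht; omega
    · intro i hi; rw [Finset.mem_range] at hi; omega
    · intro t ht; rw [Finset.mem_Icc] at ht
      congr 3
      omega
  rw [h1]
  have h2 : ∀ i ∈ Finset.range (2*k+1), (2*l*(k - ((i:ℤ) - k).natAbs) + 1)^m
      = (fun i => if i ≤ k then (2*l*i+1)^m else (2*l*(2*k-i)+1)^m) i := by
    intro i hi
    rw [Finset.mem_range] at hi
    by_cases h : i ≤ k
    · simp only [if_pos h]
      congr 3
      omega
    · simp only [if_neg h]
      congr 3
      omega
  rw [Finset.sum_congr rfl h2]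
  have hsplit : Finset.range (2*k+1) = Finset.range (k+1) ∪ Finset.Ico (k+1) (2*k+1) := by
    rw [Finset.range_eq_Ico, ← Finset.Ico_union_Ico_eq_Ico (by omega : 0 ≤ k+1) (by omega : k+1 ≤ 2*k+1), Finset.range_eq_Ico]
  rw [hsplit, Finset.sum_union (by
    rw [Finset.range_eq_Ico]
    exact Finset.Ico_disjoint_Ico_consecutive 0 (k+1) (2*k+1))]
  have h3 : ∑ i ∈ Finset.range (k+1), (if i ≤ k then (2*l*i+1)^m else (2*l*(2*k-i)+1)^m)
      = ∑ i ∈ Finset.range (k+1), (2*l*i+1)^m := by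
    apply Finset.sum_congr rfl
    intro i hi; rw [Finset.mem_range] at hi
    rw [if_pos (by omega)]
  have h4 : ∑ i ∈ Finset.Ico (k+1) (2*k+1), (if i ≤ k then (2*l*i+1)^m else (2*l*(2*k-i)+1)^m)
      = ∑ j ∈ Finset.range k, (2*l*j+1)^m := by
    refine Finset.sum_nbij' (fun i => 2*k - i) (fun j => 2*k - j) ?_ ?_ ?_ ?_ ?_
    · intro i hi; rw [Finset.mem_Ico] at hi; rw [Finset.mem_range]; omega
    · intro j hj; rw [Finset.mem_range] at hj; rw [Finset.mem_Ico]; omega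
    · intro i hi; rw [Finset.mem_Ico] at hi; omega
    · intro j hj; rw [Finset.mem_range] at hj; omega
    · intro i hi; rw [Finset.mem_Ico] at hi
      rw [if_neg (by omega)]
  rw [h3, h4, Finset.sum_range_succ]
  ring

noncomputable def Sp (r : ℕ) : Polynomial ℝ :=
  ∑ i ∈ Finset.range (r+1),
    Polynomial.C (((_root_.bernoulli i * ((r+1).choose i) / (r+1) : ℚ) : ℝ)) * Polynomial.X ^ (r+1-i)

lemma Sp_eval (r k : ℕ) : (Sp r).eval (k:ℝ) = ∑ j ∈ Finset.range k, (j:ℝ)^r := by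
  have h := sum_range_pow k r
  have h2 := congrArg (fun q : ℚ => (q : ℝ)) h
  push_cast at h2
  rw [Sp, Polynomial.eval_finset_sum, h2]
  apply Finset.sum_congr rfl
  intro i _
  simp only [Polynomial.eval_mul, Polynomial.eval_C, Polynomial.eval_pow, Polynomial.eval_X]
  push_cast
  ring

lemma Sp_coeff_eq (r q : ℕ) (h1 : 1 ≤ q) (h2 : q ≤ r+1) :
    (Sp r).coeff q = ((_root_.bernoulli (r+1-q) * ((r+1).choose (r+1-q)) / (r+1) : ℚ) : ℝ) := by
  rw [Sp, Polynomial.finset_sum_coeff]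
  rw [Finset.sum_eq_single (r+1-q)]
  · rw [Polynomial.coeff_C_mul, Polynomial.coeff_X_pow, if_pos (by omega), mul_one]
  · intro i hi hne
    rw [Finset.mem_range] at hi
    rw [Polynomial.coeff_C_mul, Polynomial.coeff_X_pow, if_neg (by omega), mul_zero]
  · intro h
    exact absurd (Finset.mem_range.mpr (by omega)) h

lemma Sp_coeff_zero (r q : ℕ) (h : r+1 < q ∨ q = 0) : (Sp r).coeff q = 0 := by
  rw [Sp, Polynomial.finset_sum_coeff]
  apply Finset.sum_eq_zero
  intro i hi
  rw [Finset.mem_range] at hi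
  rw [Polynomial.coeff_C_mul, Polynomial.coeff_X_pow, if_neg (by omega), mul_zero]

noncomputable def Qpoly (m l : ℕ) : Polynomial ℝ :=
  ∑ r ∈ Finset.range (m+1), Polynomial.C ((m.choose r : ℝ) * (2*(l:ℝ))^r) * Polynomial.X ^ r
  + Polynomial.C 2 * ∑ r ∈ Finset.range (m+1), Polynomial.C ((m.choose r : ℝ) * (2*(l:ℝ))^r) * Sp r

lemma Qpoly_eval (m l k : ℕ) : (Qpoly m l).eval (k:ℝ)
    = (2*(l:ℝ)*k+1)^m + 2 * ∑ j ∈ Finset.range k, (2*(l:ℝ)*j+1)^m := by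
  have hbinom : ∀ x : ℝ, (x+1)^m = ∑ r ∈ Finset.range (m+1), (m.choose r : ℝ) * x^r := by
    intro x
    rw [add_pow]
    apply Finset.sum_congr rfl
    intro r _
    ring
  rw [Qpoly]
  simp only [Polynomial.eval_add, Polynomial.eval_mul, Polynomial.eval_C,
    Polynomial.eval_finset_sum, Polynomial.eval_mul, Polynomial.eval_C, Polynomial.eval_pow,
    Polynomial.eval_X]
  congr 1
  · rw [hbinom (2*(l:ℝ)*k)]
    apply Finset.sum_congr rfl
    intro r _
    ring
  · congr 1
    rw [Finset.sum_congr rfl (fun r _ => by rw [Sp_eval r k])]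
    calc ∑ r ∈ Finset.range (m+1), (m.choose r : ℝ) * (2*(l:ℝ))^r * ∑ j ∈ Finset.range k, (j:ℝ)^r
        = ∑ r ∈ Finset.range (m+1), ∑ j ∈ Finset.range k, (m.choose r : ℝ) * (2*(l:ℝ))^r * (j:ℝ)^r := by
          exact Finset.sum_congr rfl fun r _ => Finset.mul_sum _ _ _
      _ = ∑ j ∈ Finset.range k, ∑ r ∈ Finset.range (m+1), (m.choose r : ℝ) * (2*(l:ℝ))^r * (j:ℝ)^r :=
          Finset.sum_comm
      _ = ∑ j ∈ Finset.range k, (2*(l:ℝ)*j+1)^m := by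
          apply Finset.sum_congr rfl
          intro j _
          rw [hbinom (2*(l:ℝ)*j)]
          apply Finset.sum_congr rfl
          intro r _
          ring

lemma Qpoly_coeff (m l t : ℕ) (ht : t ≤ m) :
    (Qpoly m l).coeff t = (m.choose t : ℝ) * (2*(l:ℝ))^t
      + 2 * ∑ r ∈ Finset.range (m+1), (m.choose r : ℝ) * (2*(l:ℝ))^r * (Sp r).coeff t := by
  rw [Qpoly, Polynomial.coeff_add, Polynomial.coeff_C_mul, Polynomial.finset_sum_coeff,
    Polynomial.finset_sum_coeff]
  congr 1
  · rw [Finset.sum_eq_single t]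
    · rw [Polynomial.coeff_C_mul, Polynomial.coeff_X_pow, if_pos rfl, mul_one]
    · intro r _ hne
      rw [Polynomial.coeff_C_mul, Polynomial.coeff_X_pow, if_neg (Ne.symm hne), mul_zero]
    · intro h
      exact absurd (Finset.mem_range.mpr (by omega)) h
  · congr 1
    apply Finset.sum_congr rfl
    intro r _
    rw [Polynomial.coeff_C_mul]

lemma bernoulli_two' : _root_.bernoulli 2 = 1/6 := by
  rw [bernoulli_eq_bernoulli'_of_ne_one (by norm_num), bernoulli'_two]

lemma bernoulli_three' : _root_.bernoulli 3 = 0 := by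
  rw [bernoulli_eq_bernoulli'_of_ne_one (by norm_num), bernoulli'_three]

lemma choose2R (a : ℕ) : (((a+2).choose 2 : ℕ) : ℝ) = ((a:ℝ)+2)*((a:ℝ)+1)/2 := by
  induction a with
  | zero => norm_num
  | succ b ih =>
    rw [show b+1+2 = (b+2)+1 by omega, Nat.choose_succ_succ ((b+2)) 1]
    push_cast [Nat.choose_one_right]
    push_cast at ih
    rw [ih]
    ring

lemma choose2Q (a : ℕ) : (((a+2).choose 2 : ℕ) : ℚ) = ((a:ℚ)+2)*((a:ℚ)+1)/2 := by
  induction a with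
  | zero => norm_num
  | succ b ih =>
    rw [show b+1+2 = (b+2)+1 by omega, Nat.choose_succ_succ ((b+2)) 1]
    push_cast [Nat.choose_one_right]
    push_cast at ih
    rw [ih]
    ring

lemma choose3R (a : ℕ) : (((a+3).choose 3 : ℕ) : ℝ) = ((a:ℝ)+3)*((a:ℝ)+2)*((a:ℝ)+1)/6 := by
  induction a with
  | zero => norm_num
  | succ b ih =>
    rw [show b+1+3 = (b+3)+1 by omega, Nat.choose_succ_succ (b+3) 2]
    push_cast [show b+3 = (b+1)+2 by omega, choose2R (b+1)]
    push_cast at ih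
    rw [show ((b:ℝ)+1)+3 = (b:ℝ)+4 by ring, show (b:ℝ)+1+2 = (b:ℝ)+3 by ring]
    rw [show (b:ℝ)+3 = (b:ℝ)+3 from rfl] at ih
    rw [ih]
    ring

lemma choose_pred (a : ℕ) : (a+2).choose (a+1) = a+2 := by
  have h := Nat.choose_symm (show 1 ≤ a+2 by omega)
  simpa [Nat.choose_one_right] using h

lemma choose_sub2 (a : ℕ) : (a+2).choose a = (a+2).choose 2 := by
  have h := Nat.choose_symm (show 2 ≤ a+2 by omega)
  simpa using h

lemma choose_sub3 (a : ℕ) : (a+3).choose a = (a+3).choose 3 := by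
  have h := Nat.choose_symm (show 3 ≤ a+3 by omega)
  simpa using h

lemma choose_sub2' (a : ℕ) : (a+3).choose (a+1) = (a+3).choose 2 := by
  have h := Nat.choose_symm (show 2 ≤ a+3 by omega)
  simpa [show a+3-2 = a+1 by omega] using h

lemma choose_pred' (a : ℕ) : (a+3).choose (a+2) = a+3 := by
  have h := Nat.choose_symm (show 1 ≤ a+3 by omega)
  simpa [show a+3-1 = a+2 by omega, Nat.choose_one_right] using h

lemma Qpoly_coeff_sub2 (m' l : ℕ) :
    (Qpoly (m'+2) l).coeff (m'+1)
      = ((m':ℝ)+2) * (2*(l:ℝ))^(m') * ((2/3)*(l:ℝ)^2+1) := by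
  rw [Qpoly_coeff _ _ _ (by omega)]
  rw [show m'+2+1 = m'+3 by omega]
  rw [Finset.sum_range_succ, Finset.sum_range_succ, Finset.sum_range_succ]
  have hzero : ∑ r ∈ Finset.range m', ((m'+2).choose r : ℝ) * (2*(l:ℝ))^r * (Sp r).coeff (m'+1) = 0 := by
    apply Finset.sum_eq_zero
    intro r hr
    rw [Finset.mem_range] at hr
    rw [Sp_coeff_zero r (m'+1) (Or.inl (by omega)), mul_zero]
  rw [hzero, zero_add]
  have c1 : (Sp m').coeff (m'+1) = 1/((m':ℝ)+1) := by
    rw [Sp_coeff_eq _ _ (by omega) (by omega), Nat.sub_self, _root_.bernoulli_zero,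
      Nat.choose_zero_right]
    push_cast
    ring
  have c2 : (Sp (m'+1)).coeff (m'+1) = -(1/2 : ℝ) := by
    rw [Sp_coeff_eq _ _ (by omega) (by omega), show m'+1+1-(m'+1) = 1 by omega,
      bernoulli_one, show m'+1+1 = m'+2 by omega, Nat.choose_one_right]
    push_cast
    have h : ((m':ℝ)+1+1) ≠ 0 := by positivity
    field_simp
    ring
  have c3 : (Sp (m'+2)).coeff (m'+1) = ((m':ℝ)+2)/12 := by
    rw [Sp_coeff_eq _ _ (by omega) (by omega), show m'+2+1-(m'+1) = 2 by omega,
      bernoulli_two', show m'+2+1 = m'+3 by omega]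
    push_cast
    rw [show m'+3 = (m'+1)+2 by omega, choose2R (m'+1)]
    push_cast
    have h : ((m':ℝ)+1+2) ≠ 0 := by positivity
    field_simp
    ring
  rw [c1, c2, c3, choose_pred m', choose_sub2 m', Nat.choose_self]
  rw [choose2R m']
  rw [pow_succ, show m'+2 = (m'+1)+1 by omega, pow_succ, pow_succ]
  have h1 : ((m':ℝ)+1) ≠ 0 := by positivity
  push_cast
  field_simp
  ring

lemma Qpoly_coeff_sub3 (m' l : ℕ) :
    (Qpoly (m'+3) l).coeff (m'+1)
      = (2/3) * (((m'+3).choose 2 : ℕ) : ℝ) * (2*(l:ℝ))^(m') * (2*(l:ℝ)^2 + 1) := by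
  rw [Qpoly_coeff _ _ _ (by omega)]
  rw [show m'+3+1 = m'+4 by omega]
  rw [Finset.sum_range_succ, Finset.sum_range_succ, Finset.sum_range_succ, Finset.sum_range_succ]
  have hzero : ∑ r ∈ Finset.range m', ((m'+3).choose r : ℝ) * (2*(l:ℝ))^r * (Sp r).coeff (m'+1) = 0 := by
    apply Finset.sum_eq_zero
    intro r hr
    rw [Finset.mem_range] at hr
    rw [Sp_coeff_zero r (m'+1) (Or.inl (by omega)), mul_zero]
  rw [hzero, zero_add]
  have c1 : (Sp m').coeff (m'+1) = 1/((m':ℝ)+1) := by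
    rw [Sp_coeff_eq _ _ (by omega) (by omega), Nat.sub_self, _root_.bernoulli_zero,
      Nat.choose_zero_right]
    push_cast
    ring
  have c2 : (Sp (m'+1)).coeff (m'+1) = -(1/2 : ℝ) := by
    rw [Sp_coeff_eq _ _ (by omega) (by omega), show m'+1+1-(m'+1) = 1 by omega,
      bernoulli_one, show m'+1+1 = m'+2 by omega, Nat.choose_one_right]
    push_cast
    have h : ((m':ℝ)+1+1) ≠ 0 := by positivity
    field_simp
    ring
  have c3 : (Sp (m'+2)).coeff (m'+1) = ((m':ℝ)+2)/12 := by
    rw [Sp_coeff_eq _ _ (by omega) (by omega), show m'+2+1-(m'+1) = 2 by omega,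
      bernoulli_two', show m'+2+1 = m'+3 by omega]
    push_cast
    rw [show m'+3 = (m'+1)+2 by omega, choose2R (m'+1)]
    push_cast
    have h : ((m':ℝ)+1+2) ≠ 0 := by positivity
    field_simp
    ring
  have c4 : (Sp (m'+3)).coeff (m'+1) = 0 := by
    rw [Sp_coeff_eq _ _ (by omega) (by omega), show m'+3+1-(m'+1) = 3 by omega,
      bernoulli_three']
    push_cast
    ring
  rw [c1, c2, c3, c4, choose_sub3 m', choose_sub2' m', choose_pred' m', Nat.choose_self]
  rw [choose3R m']
  rw [show m'+3 = (m'+1)+2 by omega, choose2R (m'+1)]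
  rw [pow_succ, show m'+2 = (m'+1)+1 by omega, pow_succ, pow_succ]
  have h1 : ((m':ℝ)+1) ≠ 0 := by positivity
  push_cast
  field_simp
  ring

lemma g_eq_coeff (m l : ℕ) (hm : 1 ≤ m) (g : ℕ → ℝ)
    (hg : ∀ k : ℕ, 1 ≤ k →
      (Nat.card ↥((k : ℝ) • Qnl (m+1) l ∩ intLattice (m+1)) : ℝ) =
        ∑ i ∈ Finset.range (m+1+1), g i * (k : ℝ) ^ i)
    (i : ℕ) (hi : i ≤ m+1) : g i = (Qpoly m l).coeff i := by
  have hcount : ∀ k : ℕ, 1 ≤ k →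
      (Nat.card ↥((k : ℝ) • Qnl (m+1) l ∩ intLattice (m+1)) : ℝ) = (Qpoly m l).eval (k:ℝ) := by
    intro k hk
    have hkpos : (0:ℝ) < (k:ℝ) := by exact_mod_cast hk
    rw [Qnl_eq_Tset m l hm, smul_Tset m l (k:ℝ) hkpos, card_Tset_inter, sum_Icc_eq,
      Qpoly_eval]
    push_cast
    ring
  set P : Polynomial ℝ := ∑ i ∈ Finset.range (m+2), Polynomial.C (g i) * Polynomial.X ^ i with hP
  have hPeval : ∀ k : ℕ, 1 ≤ k → P.eval (k:ℝ) = (Qpoly m l).eval (k:ℝ) := by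
    intro k hk
    rw [hP, Polynomial.eval_finset_sum, ← hcount k hk, hg k hk]
    apply Finset.sum_congr rfl
    intro j _
    simp
  have hPQ : P = Qpoly m l := by
    apply Polynomial.eq_of_infinite_eval_eq
    apply Set.infinite_of_injective_forall_mem
      (f := fun k : ℕ => ((k+1 : ℕ) : ℝ))
    · intro a b hab
      simpa using hab
    · intro a
      exact hPeval (a+1) (by omega)
  have : (Qpoly m l).coeff i = P.coeff i := by rw [hPQ]
  rw [this, hP, Polynomial.finset_sum_coeff]
  rw [Finset.sum_eq_single i]
  · rw [Polynomial.coeff_C_mul, Polynomial.coeff_X_pow, if_pos rfl, mul_one]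
  · intro r _ hne
    rw [Polynomial.coeff_C_mul, Polynomial.coeff_X_pow, if_neg (Ne.symm hne), mul_zero]
  · intro h
    exact absurd (Finset.mem_range.mpr (by omega)) h

theorem stmt17 (n l : ℕ) (hl : 1 ≤ l)
    (g : ℕ → ℝ)
    (hg : ∀ k : ℕ, 1 ≤ k →
      (Nat.card ↥((k : ℝ) • Qnl n l ∩ intLattice n) : ℝ) =
        ∑ i ∈ Finset.range (n + 1), g i * (k : ℝ) ^ i) :
    (3 ≤ n → g (n - 2) =
      ((n : ℝ) - 1) * (2 * (l : ℝ)) ^ (n - 3) * ((2 / 3) * (l : ℝ) ^ 2 + 1)) ∧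
    (4 ≤ n → g (n - 3) =
      (2 / 3) * ((n - 1).choose 2 : ℝ) * (2 * (l : ℝ)) ^ (n - 4) * (2 * (l : ℝ) ^ 2 + 1)) := by
  constructor
  · intro hn3
    obtain ⟨m', rfl⟩ : ∃ m', n = m'+2+1 := ⟨n-3, by omega⟩
    have hkey := g_eq_coeff (m'+2) l (by omega) g hg (m'+1) (by omega)
    rw [show m'+2+1-2 = m'+1 by omega, hkey, Qpoly_coeff_sub2 m' l,
      show m'+2+1-3 = m' by omega]
    push_cast
    ring
  · intro hn4
    obtain ⟨m', rfl⟩ : ∃ m', n = m'+3+1 := ⟨n-4, by omega⟩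
    have hkey := g_eq_coeff (m'+3) l (by omega) g hg (m'+1) (by omega)
    rw [show m'+3+1-3 = m'+1 by omega, hkey, Qpoly_coeff_sub3 m' l,
      show m'+3+1-4 = m' by omega, show m'+3+1-1 = m'+3 by omega]
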